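/- (First Analyticity Theorem) Let ζ ∈ [0,1), let r ∈ ℕ with r ≥ 1, and let (a_n)_{n∈ℕ} be a summable sequence of nonnegative real numbers. Then for every z in the open unit disk D = {z ∈ ℂ : |z| < 1} the series F_r(z) = Σ_{n=0}^∞ a_n · (τ_z^{(n)}(1))^r converges, and the function z ↦ F_r(z) is analytic on D. -/

import Mathlib

/-- `h ζ w = ((ζ + w)/(1 + ζ w))^2`. -/
noncomputable def hmap (ζ : ℝ) (w : ℂ) : ℂ := (((ζ : ℂ) + w) / (1 + (ζ : ℂ) * w)) ^ 2

/-- The `n`-th iterate `τ_z^{(n)}(1)` of `u ↦ h(z·u)` starting from `1`. -/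
noncomputable def tauIter (ζ : ℝ) (z : ℂ) : ℕ → ℂ
  | 0 => 1
  | n + 1 => hmap ζ (z * tauIter ζ z n)

lemma denom_ne (ζ : ℝ) (hζ0 : 0 ≤ ζ) (hζ1 : ζ < 1) {w : ℂ} (hw : ‖w‖ ≤ 1) :
    1 + (ζ : ℂ) * w ≠ 0 := by
  intro h
  have h1 : (ζ : ℂ) * w = -1 := by linear_combination h
  have h2 : ‖(ζ : ℂ) * w‖ = 1 := by rw [h1]; simp
  rw [norm_mul, Complex.norm_real, Real.norm_of_nonneg hζ0] at h2
  nlinarith [norm_nonneg w]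

lemma hmap_abs_le (ζ : ℝ) (hζ0 : 0 ≤ ζ) (hζ1 : ζ < 1) {w : ℂ} (hw : ‖w‖ ≤ 1) :
    ‖hmap ζ w‖ ≤ 1 := by
  have hd := denom_ne ζ hζ0 hζ1 hw
  have hns : Complex.normSq ((ζ : ℂ) + w) ≤ Complex.normSq (1 + (ζ : ℂ) * w) := by
    have hw2 : w.re ^ 2 + w.im ^ 2 ≤ 1 := by
      have h := Complex.sq_norm w
      rw [Complex.normSq_apply] at h
      nlinarith [norm_nonneg w]
    simp only [Complex.normSq_apply, Complex.add_re, Complex.add_im, Complex.mul_re,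
      Complex.mul_im, Complex.ofReal_re, Complex.ofReal_im, Complex.one_re, Complex.one_im]
    nlinarith [mul_nonneg (sub_nonneg.mpr (by nlinarith : ζ^2 ≤ 1)) (sub_nonneg.mpr hw2)]
  have h1 : ‖(ζ : ℂ) + w‖ ≤ ‖1 + (ζ : ℂ) * w‖ := by
    rw [Complex.norm_def, Complex.norm_def]
    exact Real.sqrt_le_sqrt hns
  have hdpos : 0 < ‖1 + (ζ : ℂ) * w‖ := by
    exact norm_pos_iff.mpr hd
  rw [hmap, norm_pow, norm_div]
  have hq : ‖(ζ : ℂ) + w‖ / ‖1 + (ζ : ℂ) * w‖ ≤ 1 :=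
    (div_le_one hdpos).mpr h1
  exact pow_le_one₀ (by positivity) hq

lemma tau_abs_le (ζ : ℝ) (hζ0 : 0 ≤ ζ) (hζ1 : ζ < 1) {z : ℂ} (hz : ‖z‖ < 1) :
    ∀ n, ‖tauIter ζ z n‖ ≤ 1 := by
  intro n
  induction n with
  | zero => simp [tauIter]
  | succ n ih =>
    have : ‖z * tauIter ζ z n‖ ≤ 1 := by
      rw [norm_mul]
      nlinarith [norm_nonneg z, norm_nonneg (tauIter ζ z n)]
    exact hmap_abs_le ζ hζ0 hζ1 this

lemma tau_diffOn (ζ : ℝ) (hζ0 : 0 ≤ ζ) (hζ1 : ζ < 1) (n : ℕ) :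
    DifferentiableOn ℂ (fun z => tauIter ζ z n) {z : ℂ | ‖z‖ < 1} := by
  induction n with
  | zero => simpa [tauIter] using differentiableOn_const (1 : ℂ)
  | succ n ih =>
    have key : ∀ z ∈ {z : ℂ | ‖z‖ < 1}, 1 + (ζ : ℂ) * (z * tauIter ζ z n) ≠ 0 := by
      intro z hz
      have hz' : ‖z‖ < 1 := hz
      apply denom_ne ζ hζ0 hζ1
      have h1 := tau_abs_le ζ hζ0 hζ1 hz' n
      rw [norm_mul]
      nlinarith [norm_nonneg z, norm_nonneg (tauIter ζ z n), hz'.le]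
    have hmul : DifferentiableOn ℂ (fun z => z * tauIter ζ z n) {z : ℂ | ‖z‖ < 1} :=
      (differentiableOn_id).mul ih
    have hnum : DifferentiableOn ℂ (fun z => (ζ : ℂ) + z * tauIter ζ z n)
        {z : ℂ | ‖z‖ < 1} := (differentiableOn_const _).add hmul
    have hden : DifferentiableOn ℂ (fun z => 1 + (ζ : ℂ) * (z * tauIter ζ z n))
        {z : ℂ | ‖z‖ < 1} :=
      (differentiableOn_const _).add ((differentiableOn_const _).mul hmul)
    simpa [tauIter, hmap] using (show DifferentiableOn ℂ (fun z => (((ζ : ℂ) + z * tauIter ζ z n) / (1 + (ζ : ℂ) * (z * tauIter ζ z n))) ^ 2) {z : ℂ | ‖z‖ < 1} from (hnum.div hden key).pow 2)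

/-- (First Analyticity Theorem.) For `0 ≤ ζ < 1`, `r ≥ 1` and a summable sequence of
nonnegative reals `a`, the series `F_r(z) = Σ aₙ (τ_z^{(n)}(1))^r` converges at every
point of the open unit disk and defines an analytic function there. -/
theorem stmt2 (ζ : ℝ) (hζ0 : 0 ≤ ζ) (hζ1 : ζ < 1) (r : ℕ) (hr : 1 ≤ r)
    (a : ℕ → ℝ) (ha : Summable a) (ha' : ∀ n, 0 ≤ a n) :
    (∀ z ∈ {z : ℂ | ‖z‖ < 1},
        Summable (fun n : ℕ => (a n : ℂ) * (tauIter ζ z n) ^ r)) ∧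
    AnalyticOnNhd ℂ (fun z => ∑' n : ℕ, (a n : ℂ) * (tauIter ζ z n) ^ r)
      {z : ℂ | ‖z‖ < 1} := by
  set s : Set ℂ := {z : ℂ | ‖z‖ < 1} with hs
  have hsopen : IsOpen s := isOpen_lt continuous_norm continuous_const
  have hbound : ∀ (n : ℕ) (z : ℂ), z ∈ s → ‖(a n : ℂ) * tauIter ζ z n ^ r‖ ≤ a n := by
    intro n z hz
    rw [norm_mul, norm_pow, Complex.norm_real, Real.norm_of_nonneg (ha' n)]
    have h1 : ‖tauIter ζ z n‖ ^ r ≤ 1 := pow_le_one₀ (norm_nonneg _) (tau_abs_le ζ hζ0 hζ1 hz n)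
    nlinarith [ha' n, pow_nonneg (norm_nonneg (tauIter ζ z n)) r]
  constructor
  · intro z hz
    exact Summable.of_norm_bounded ha (fun n => hbound n z hz)
  · have hTU : TendstoUniformlyOn (fun (t : Finset ℕ) z => ∑ n ∈ t, (a n : ℂ) * tauIter ζ z n ^ r)
        (fun z => ∑' n : ℕ, (a n : ℂ) * tauIter ζ z n ^ r) Filter.atTop s :=
      tendstoUniformlyOn_tsum ha hbound
    have hdiff : ∀ t : Finset ℕ,
        DifferentiableOn ℂ (fun z => ∑ n ∈ t, (a n : ℂ) * tauIter ζ z n ^ r) s := by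
      intro t
      apply DifferentiableOn.fun_sum
      intro n _
      exact (differentiableOn_const _).mul ((tau_diffOn ζ hζ0 hζ1 n).pow r)
    have hD : DifferentiableOn ℂ (fun z => ∑' n : ℕ, (a n : ℂ) * tauIter ζ z n ^ r) s :=
      hTU.tendstoLocallyUniformlyOn.differentiableOn
        (Filter.Eventually.of_forall hdiff) hsopen
    exact hD.analyticOnNhd hsopen
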